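/- Let p be a prime and H > 0. Let {A^{(m)}_ℓ : (m,ℓ) ∈ I} be a family in L²(Ω;ℂ), indexed by I = {(m,ℓ) : m ∈ ℕ, 0 < ℓ < p^m, p ∤ ℓ}, which is orthogonal (E(A^{(m)}_ℓ · conj(A^{(m')}_{ℓ'})) = 0 whenever (m,ℓ) ≠ (m',ℓ')) and satisfies the joint distributional identity (p^{−H}·A^{(m)}_ℓ)_{(m,ℓ)∈I} ≐ (Σ_{t=0}^{p−1} A^{(m+1)}_{t·p^m+ℓ})_{(m,ℓ)∈I}. Then the series Σ_{m=1}^∞ Σ_{0<ℓ<p^m, p∤ℓ} A^{(m)}_ℓ·e(nℓ/p^m) converges in L²(Ω;ℂ) uniformly in n: for every ε > 0 there exists M₀ such that for all N ≥ M ≥ M₀ and all n ∈ ℕ₀, E|Σ_{m=M}^{N} Σ_{0<ℓ<p^m, p∤ℓ} A^{(m)}_ℓ·e(nℓ/p^m)|² ≤ ε. -/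

import Mathlib

open MeasureTheory ProbabilityTheory Filter
open scoped ENNReal

noncomputable section

/-- The `p`-adic norm of a natural number, as a real number (`0` for `n = 0`). -/
def padicNormNat (p n : ℕ) : ℝ := ((padicNorm p (n : ℚ) : ℚ) : ℝ)

/-- Equality in distribution of two families of random variables: the laws of the
induced maps into the product space coincide. -/
def EqDistFam {ι Ω₁ Ω₂ E : Type*} [MeasurableSpace Ω₁] [MeasurableSpace Ω₂]
    [MeasurableSpace E]
    (P₁ : Measure Ω₁) (P₂ : Measure Ω₂) (X : ι → Ω₁ → E) (Y : ι → Ω₂ → E) : Prop :=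
  Measure.map (fun ω i => X i ω) P₁ = Measure.map (fun ω i => Y i ω) P₂

/-- A discrete-time process is self-similar with scaling function `b` if for every `n ≥ 1`,
`(X (n*m))ₘ ≐ (b n • X m)ₘ`. -/
def SelfSimilar {Ω : Type*} [MeasurableSpace Ω] (P : Measure Ω) (X : ℕ → Ω → ℝ)
    (b : ℕ → ℝ) : Prop :=
  ∀ n : ℕ, 1 ≤ n → EqDistFam P P (fun m ω => X (n * m) ω) (fun m ω => b n * X m ω)

/-- A discrete-time process has stationary increments if for every `k ≥ 1`,
`(X (m+1) - X m)ₘ ≐ (X (m+k+1) - X (m+k))ₘ`. -/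
def StationaryIncrements {Ω : Type*} [MeasurableSpace Ω] (P : Measure Ω)
    (X : ℕ → Ω → ℝ) : Prop :=
  ∀ k : ℕ, 1 ≤ k → EqDistFam P P (fun m ω => X (m + 1) ω - X m ω)
    (fun m ω => X (m + k + 1) ω - X (m + k) ω)

/-- The index set `I = {(m, ℓ) : m ≥ 1, 0 < ℓ < p^m, p ∤ ℓ}`. -/
def PIdx (p : ℕ) : Type := {q : ℕ × ℕ // 1 ≤ q.1 ∧ 0 < q.2 ∧ q.2 < p ^ q.1 ∧ ¬ p ∣ q.2}

/-- `e x = exp(2πix)`. -/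
def eFun (x : ℝ) : ℂ := Complex.exp (2 * Real.pi * Complex.I * x)

private lemma memLp_conj {Ω : Type*} [MeasurableSpace Ω] {P : Measure Ω} {f : Ω → ℂ}
    (hf : MemLp f 2 P) : MemLp (fun ω => (starRingEnd ℂ) (f ω)) 2 P := by
  refine ⟨Complex.continuous_conj.comp_aestronglyMeasurable hf.1, ?_⟩
  have h : eLpNorm (fun ω => (starRingEnd ℂ) (f ω)) 2 P = eLpNorm f 2 P :=
    eLpNorm_congr_nnnorm_ae (Filter.Eventually.of_forall fun ω => by simp)
  rw [h]; exact hf.2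

private lemma integrable_mul_conj {Ω : Type*} [MeasurableSpace Ω] {P : Measure Ω} {f g : Ω → ℂ}
    (hf : MemLp f 2 P) (hg : MemLp g 2 P) :
    Integrable (fun ω => f ω * (starRingEnd ℂ) (g ω)) P := by
  have h : MemLp (f • fun ω => (starRingEnd ℂ) (g ω)) 1 P :=
    (memLp_conj hg).smul hf
  exact memLp_one_iff_integrable.mp h

private lemma integral_norm_sq_eq {Ω : Type*} [MeasurableSpace Ω] {P : Measure Ω} {f : Ω → ℂ}
    (hf : AEMeasurable f P) :
    ∫ ω, ‖f ω‖ ^ 2 ∂P = (∫⁻ ω, (‖f ω‖₊ : ℝ≥0∞) ^ 2 ∂P).toReal := by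
  rw [integral_eq_lintegral_of_nonneg_ae (Filter.Eventually.of_forall fun ω => sq_nonneg _)
    ((hf.norm.pow_const 2).aestronglyMeasurable)]
  congr 1
  refine lintegral_congr fun ω => ?_
  rw [ENNReal.ofReal_pow (norm_nonneg _), ofReal_norm, enorm_eq_nnnorm]

private lemma lintegral_norm_sq_lt_top {Ω : Type*} [MeasurableSpace Ω] {P : Measure Ω} {f : Ω → ℂ}
    (hf : MemLp f 2 P) :
    ∫⁻ ω, (‖f ω‖₊ : ℝ≥0∞) ^ 2 ∂P < ∞ := by
  have h := hf.2
  rw [eLpNorm_eq_lintegral_rpow_enorm_toReal two_ne_zero ENNReal.ofNat_ne_top] at h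
  have h2 : (2 : ℝ≥0∞).toReal = 2 := by simp
  rw [h2] at h
  rw [ENNReal.rpow_lt_top_iff_of_pos (by norm_num)] at h
  have : ∀ ω, ‖f ω‖ₑ ^ (2 : ℝ) = (‖f ω‖₊ : ℝ≥0∞) ^ (2 : ℕ) := fun ω => by
    rw [enorm_eq_nnnorm, ← ENNReal.rpow_natCast]; norm_num
  rwa [lintegral_congr this] at h

private lemma pyth_real {Ω : Type*} [MeasurableSpace Ω] {P : Measure Ω} {ι : Type*}
    (s : Finset ι) (f : ι → Ω → ℂ)
    (hL2 : ∀ i ∈ s, MemLp (f i) 2 P)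
    (horth : ∀ i ∈ s, ∀ j ∈ s, i ≠ j → ∫ ω, f i ω * (starRingEnd ℂ) (f j ω) ∂P = 0) :
    ∫ ω, ‖∑ i ∈ s, f i ω‖ ^ 2 ∂P = ∑ i ∈ s, ∫ ω, ‖f i ω‖ ^ 2 ∂P := by
  classical
  have hij : ∀ i ∈ s, ∀ j ∈ s, Integrable (fun ω => f i ω * (starRingEnd ℂ) (f j ω)) P :=
    fun i hi j hj => integrable_mul_conj (hL2 i hi) (hL2 j hj)
  have hsum : MemLp (fun ω => ∑ i ∈ s, f i ω) 2 P := memLp_finset_sum s hL2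
  have htot : Integrable
      (fun ω => (∑ i ∈ s, f i ω) * (starRingEnd ℂ) (∑ j ∈ s, f j ω)) P :=
    integrable_mul_conj hsum hsum
  have hnormsq : ∀ z : ℂ, ‖z‖ ^ 2 = (z * (starRingEnd ℂ) z).re := fun z => by
    rw [Complex.mul_conj]
    simp [Complex.sq_norm]
  have hint2 : ∫ ω, (∑ i ∈ s, f i ω) * (starRingEnd ℂ) (∑ j ∈ s, f j ω) ∂P
      = ∑ i ∈ s, ∫ ω, f i ω * (starRingEnd ℂ) (f i ω) ∂P := by
    have expand : (fun ω => (∑ i ∈ s, f i ω) * (starRingEnd ℂ) (∑ j ∈ s, f j ω))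
        = fun ω => ∑ i ∈ s, ∑ j ∈ s, f i ω * (starRingEnd ℂ) (f j ω) := by
      funext ω
      rw [map_sum, Finset.sum_mul_sum]
    rw [expand, integral_finset_sum s
      (fun i hi => integrable_finset_sum s (fun j hj => hij i hi j hj))]
    refine Finset.sum_congr rfl fun i hi => ?_
    rw [integral_finset_sum s (fun j hj => hij i hi j hj)]
    exact Finset.sum_eq_single_of_mem i hi
      (fun j hj hne => horth i hi j hj (fun h => hne h.symm))
  calc ∫ ω, ‖∑ i ∈ s, f i ω‖ ^ 2 ∂P
      = ∫ ω, ((∑ i ∈ s, f i ω) * (starRingEnd ℂ) (∑ j ∈ s, f j ω)).re ∂P := by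
        refine integral_congr_ae (Filter.Eventually.of_forall fun ω => ?_)
        exact hnormsq _
    _ = (∫ ω, (∑ i ∈ s, f i ω) * (starRingEnd ℂ) (∑ j ∈ s, f j ω) ∂P).re := by
        have := integral_re htot
        simpa [RCLike.re_to_complex] using this
    _ = (∑ i ∈ s, ∫ ω, f i ω * (starRingEnd ℂ) (f i ω) ∂P).re := by rw [hint2]
    _ = ∑ i ∈ s, (∫ ω, f i ω * (starRingEnd ℂ) (f i ω) ∂P).re := by
        rw [Complex.re_sum]
    _ = ∑ i ∈ s, ∫ ω, ‖f i ω‖ ^ 2 ∂P := by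
        refine Finset.sum_congr rfl fun i hi => ?_
        have := integral_re (hij i hi i hi)
        simp only [RCLike.re_to_complex] at this
        rw [← this]
        refine integral_congr_ae (Filter.Eventually.of_forall fun ω => ?_)
        exact (hnormsq _).symm

private lemma pyth_lintegral {Ω : Type*} [MeasurableSpace Ω] {P : Measure Ω} {ι : Type*}
    (s : Finset ι) (f : ι → Ω → ℂ)
    (hmeas : ∀ i ∈ s, AEMeasurable (f i) P)
    (hL2 : ∀ i ∈ s, MemLp (f i) 2 P)
    (horth : ∀ i ∈ s, ∀ j ∈ s, i ≠ j → ∫ ω, f i ω * (starRingEnd ℂ) (f j ω) ∂P = 0) :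
    ∫⁻ ω, (‖∑ i ∈ s, f i ω‖₊ : ℝ≥0∞) ^ 2 ∂P
      = ∑ i ∈ s, ∫⁻ ω, (‖f i ω‖₊ : ℝ≥0∞) ^ 2 ∂P := by
  have hsum : MemLp (fun ω => ∑ i ∈ s, f i ω) 2 P := memLp_finset_sum s hL2
  have hL : ∫⁻ ω, (‖∑ i ∈ s, f i ω‖₊ : ℝ≥0∞) ^ 2 ∂P ≠ ∞ :=
    (lintegral_norm_sq_lt_top hsum).ne
  have hR : ∀ i ∈ s, ∫⁻ ω, (‖f i ω‖₊ : ℝ≥0∞) ^ 2 ∂P ≠ ∞ :=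
    fun i hi => (lintegral_norm_sq_lt_top (hL2 i hi)).ne
  have hRsum : (∑ i ∈ s, ∫⁻ ω, (‖f i ω‖₊ : ℝ≥0∞) ^ 2 ∂P) ≠ ∞ := by
    rw [← lt_top_iff_ne_top]
    exact ENNReal.sum_lt_top.mpr (fun i hi => lt_top_iff_ne_top.mpr (hR i hi))
  rw [← ENNReal.toReal_eq_toReal_iff' hL hRsum]
  have hmsum : AEMeasurable (fun ω => ∑ i ∈ s, f i ω) P := by
    exact Finset.aemeasurable_fun_sum s hmeas
  rw [← integral_norm_sq_eq hmsum, ENNReal.toReal_sum hR, pyth_real s f hL2 horth]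
  refine Finset.sum_congr rfl fun i hi => ?_
  exact integral_norm_sq_eq (hmeas i hi)

private lemma child_cond {p : ℕ} (hp : p.Prime) {m t ℓ : ℕ} (hm : 1 ≤ m) (ht : t < p)
    (hℓ0 : 0 < ℓ) (hℓp : ℓ < p ^ m) (hnd : ¬ p ∣ ℓ) :
    0 < t * p ^ m + ℓ ∧ t * p ^ m + ℓ < p ^ (m + 1) ∧ ¬ p ∣ t * p ^ m + ℓ := by
  have hpdvd : p ∣ p ^ m := dvd_pow_self p (by omega)
  refine ⟨by omega, ?_, ?_⟩
  · have h1 : t * p ^ m + ℓ < (t + 1) * p ^ m := by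
      rw [add_mul, one_mul]; omega
    have h2 : (t + 1) * p ^ m ≤ p * p ^ m := Nat.mul_le_mul_right _ (by omega)
    calc t * p ^ m + ℓ < (t + 1) * p ^ m := h1
      _ ≤ p * p ^ m := h2
      _ = p ^ (m + 1) := by rw [pow_succ, mul_comm]
  · intro h
    exact hnd ((Nat.dvd_add_right (hpdvd.mul_left t)).mp h)

private lemma sum_reindex {p : ℕ} (hp : p.Prime) (m : ℕ) (hm : 1 ≤ m) (g : ℕ → ℝ≥0∞) :
    ∑ ℓ ∈ (Finset.Ioo 0 (p ^ (m + 1))).filter (fun ℓ => ¬ p ∣ ℓ), g ℓ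
      = ∑ ℓ ∈ (Finset.Ioo 0 (p ^ m)).filter (fun ℓ => ¬ p ∣ ℓ),
          ∑ t ∈ Finset.range p, g (t * p ^ m + ℓ) := by
  classical
  have hpm : 0 < p ^ m := pow_pos hp.pos m
  have hpdvd : p ∣ p ^ m := dvd_pow_self p (by omega)
  rw [← Finset.sum_product'
    (s := (Finset.Ioo 0 (p ^ m)).filter (fun ℓ => ¬ p ∣ ℓ)) (t := Finset.range p)
    (f := fun ℓ t => g (t * p ^ m + ℓ))]
  refine (Finset.sum_nbij' (fun ℓ => (ℓ % p ^ m, ℓ / p ^ m))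
    (fun x => x.2 * p ^ m + x.1) ?_ ?_ ?_ ?_ ?_)
  · intro ℓ hℓ
    simp only [Finset.mem_filter, Finset.mem_Ioo] at hℓ
    obtain ⟨⟨h0, hlt⟩, hnd⟩ := hℓ
    simp only [Finset.mem_product, Finset.mem_filter, Finset.mem_Ioo, Finset.mem_range]
    refine ⟨⟨⟨?_, Nat.mod_lt _ hpm⟩, ?_⟩, ?_⟩
    · rcases Nat.eq_zero_or_pos (ℓ % p ^ m) with h | h
      · exact absurd (hpdvd.trans (Nat.dvd_of_mod_eq_zero h)) hnd
      · exact h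
    · intro h
      refine hnd ?_
      have hdm := Nat.div_add_mod ℓ (p ^ m)
      rw [← hdm]
      exact Nat.dvd_add (hpdvd.mul_right _) h
    · rw [Nat.div_lt_iff_lt_mul hpm]
      rw [pow_succ] at hlt
      rwa [mul_comm]
  · intro x hx
    simp only [Finset.mem_product, Finset.mem_filter, Finset.mem_Ioo, Finset.mem_range] at hx
    obtain ⟨⟨⟨h0, hlt⟩, hnd⟩, ht⟩ := hx
    have := child_cond hp hm ht h0 hlt hnd
    simp only [Finset.mem_filter, Finset.mem_Ioo]
    exact ⟨⟨this.1, this.2.1⟩, this.2.2⟩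
  · intro ℓ hℓ
    show (ℓ / p ^ m) * p ^ m + ℓ % p ^ m = ℓ
    rw [mul_comm]
    exact Nat.div_add_mod ℓ (p ^ m)
  · intro x hx
    simp only [Finset.mem_product, Finset.mem_filter, Finset.mem_Ioo, Finset.mem_range] at hx
    obtain ⟨⟨⟨h0, hlt⟩, hnd⟩, ht⟩ := hx
    refine Prod.ext ?_ ?_
    · show (x.2 * p ^ m + x.1) % p ^ m = x.1
      rw [mul_comm, Nat.mul_add_mod]
      exact Nat.mod_eq_of_lt hlt
    · show (x.2 * p ^ m + x.1) / p ^ m = x.2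
      rw [mul_comm, Nat.mul_add_div hpm, Nat.div_eq_of_lt hlt, add_zero]
  · intro ℓ hℓ
    have : (ℓ / p ^ m) * p ^ m + ℓ % p ^ m = ℓ := by
      rw [mul_comm]; exact Nat.div_add_mod ℓ (p ^ m)
    rw [this]

private noncomputable def Gq {Ω : Type*} [MeasurableSpace Ω] (P : Measure Ω)
    (A : ℕ → ℕ → Ω → ℂ) (m ℓ : ℕ) : ℝ≥0∞ :=
  ∫⁻ ω, (‖A m ℓ ω‖₊ : ℝ≥0∞) ^ 2 ∂P

private def Filq (p m : ℕ) : Finset ℕ := (Finset.Ioo 0 (p ^ m)).filter (fun ℓ => ¬ p ∣ ℓ)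

private noncomputable def Sq {Ω : Type*} [MeasurableSpace Ω] (P : Measure Ω)
    (A : ℕ → ℕ → Ω → ℂ) (p m : ℕ) : ℝ≥0∞ :=
  ∑ ℓ ∈ Filq p m, Gq P A m ℓ

private lemma norm_eFun (x : ℝ) : ‖eFun x‖ = 1 := by
  rw [eFun, Complex.norm_exp]
  have : (2 * ↑Real.pi * Complex.I * ↑x).re = 0 := by
    simp [Complex.mul_re, Complex.mul_im]
  rw [this, Real.exp_zero]

/-- Proposition 4.7: for an orthogonal family satisfying the self-similarity relation,
the double Fourier series converges in `L²`, uniformly in `n`. -/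
theorem stmt18 {Ω : Type*} [MeasurableSpace Ω] (P : Measure Ω) [IsProbabilityMeasure P]
    (p : ℕ) (hp : p.Prime) (H : ℝ) (hH : 0 < H)
    (A : ℕ → ℕ → Ω → ℂ) (hAmeas : ∀ m ℓ, Measurable (A m ℓ))
    (hL2 : ∀ m ℓ : ℕ, 1 ≤ m → 0 < ℓ → ℓ < p ^ m → ¬ p ∣ ℓ → MemLp (A m ℓ) 2 P)
    (horth : ∀ m ℓ m' ℓ' : ℕ, 1 ≤ m → 0 < ℓ → ℓ < p ^ m → ¬ p ∣ ℓ →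
      1 ≤ m' → 0 < ℓ' → ℓ' < p ^ m' → ¬ p ∣ ℓ' → (m, ℓ) ≠ (m', ℓ') →
      ∫ ω, A m ℓ ω * (starRingEnd ℂ) (A m' ℓ' ω) ∂P = 0)
    (hscale : EqDistFam P P
      (fun i : PIdx p => fun ω => (((p : ℝ) ^ (-H) : ℝ) : ℂ) * A i.1.1 i.1.2 ω)
      (fun i : PIdx p => fun ω =>
        ∑ t ∈ Finset.range p, A (i.1.1 + 1) (t * p ^ i.1.1 + i.1.2) ω)) :
    ∀ ε : ℝ, 0 < ε → ∃ M₀ : ℕ, ∀ M N : ℕ, M₀ ≤ M → M ≤ N → ∀ n : ℕ,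
      ∫ ω, ‖∑ m ∈ Finset.Icc M N,
          ∑ ℓ ∈ (Finset.Ioo 0 (p ^ m)).filter (fun ℓ => ¬ p ∣ ℓ),
            A m ℓ ω * eFun ((n : ℝ) * (ℓ : ℝ) / (p : ℝ) ^ m)‖ ^ 2 ∂P ≤ ε := by
  classical
  intro ε hε
  set c : ℝ := (p : ℝ) ^ (-H) with hc
  have hp1 : (1 : ℝ) < p := by exact_mod_cast hp.one_lt
  have hc0 : 0 < c := Real.rpow_pos_of_pos (by linarith) _
  have hc1 : c < 1 := Real.rpow_lt_one_of_one_lt_of_neg hp1 (by linarith)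
  set κ : ℝ≥0∞ := ENNReal.ofReal c ^ 2 with hκ
  have hκ1 : κ < 1 := by
    rw [hκ, ← ENNReal.ofReal_pow hc0.le]
    refine ENNReal.ofReal_lt_one.mpr ?_
    nlinarith
  have hpm : ∀ m : ℕ, 0 < p ^ m := fun m => pow_pos hp.pos m
  have hFilmem : ∀ m ℓ : ℕ, ℓ ∈ Filq p m ↔ 0 < ℓ ∧ ℓ < p ^ m ∧ ¬ p ∣ ℓ := by
    intro m ℓ
    simp [Filq, Finset.mem_filter, Finset.mem_Ioo, and_assoc]
  have hGfin : ∀ m ℓ : ℕ, 1 ≤ m → ℓ ∈ Filq p m → Gq P A m ℓ ≠ ∞ := by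
    intro m ℓ hm hmem
    rw [hFilmem] at hmem
    exact (lintegral_norm_sq_lt_top (hL2 m ℓ hm hmem.1 hmem.2.1 hmem.2.2)).ne
  -- key scaling identity
  have hkey : ∀ m ℓ : ℕ, 1 ≤ m → ℓ ∈ Filq p m →
      κ * Gq P A m ℓ = ∑ t ∈ Finset.range p, Gq P A (m + 1) (t * p ^ m + ℓ) := by
    intro m ℓ hm hmem
    rw [hFilmem] at hmem
    obtain ⟨h0, hlt, hnd⟩ := hmem
    have hXmeas : Measurable (fun ω (i : PIdx p) => ((c : ℝ) : ℂ) * A i.1.1 i.1.2 ω) :=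
      measurable_pi_lambda _ fun i => measurable_const.mul (hAmeas _ _)
    have hYmeas : Measurable (fun ω (i : PIdx p) =>
        ∑ t ∈ Finset.range p, A (i.1.1 + 1) (t * p ^ i.1.1 + i.1.2) ω) :=
      measurable_pi_lambda _ fun i => Finset.measurable_sum _ fun t _ => hAmeas _ _
    have hsc : Measure.map (fun ω (i : PIdx p) => ((c : ℝ) : ℂ) * A i.1.1 i.1.2 ω) P
        = Measure.map (fun ω (i : PIdx p) =>
            ∑ t ∈ Finset.range p, A (i.1.1 + 1) (t * p ^ i.1.1 + i.1.2) ω) P := hscale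
    set i₀ : PIdx p := ⟨(m, ℓ), hm, h0, hlt, hnd⟩ with hi₀
    have hφ : Measurable (fun x : PIdx p → ℂ => (‖x i₀‖₊ : ℝ≥0∞) ^ 2) :=
      ((measurable_pi_apply i₀).nnnorm.coe_nnreal_ennreal).pow_const 2
    have htrans :
        ∫⁻ ω, (‖((c : ℝ) : ℂ) * A m ℓ ω‖₊ : ℝ≥0∞) ^ 2 ∂P
          = ∫⁻ ω, (‖∑ t ∈ Finset.range p, A (m + 1) (t * p ^ m + ℓ) ω‖₊ : ℝ≥0∞) ^ 2 ∂P := by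
      have h1 := lintegral_map (μ := P) hφ hXmeas
      have h2 := lintegral_map (μ := P) hφ hYmeas
      rw [hsc, h2] at h1
      exact h1.symm
    have hLHS : ∫⁻ ω, (‖((c : ℝ) : ℂ) * A m ℓ ω‖₊ : ℝ≥0∞) ^ 2 ∂P = κ * Gq P A m ℓ := by
      have hcc : ((‖((c : ℝ) : ℂ)‖₊ : ℝ≥0∞)) = ENNReal.ofReal c := by
        rw [← enorm_eq_nnnorm, ← ofReal_norm, Complex.norm_real, Real.norm_of_nonneg hc0.le]
      have hptw : ∀ ω, (‖((c : ℝ) : ℂ) * A m ℓ ω‖₊ : ℝ≥0∞) ^ 2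
          = κ * (‖A m ℓ ω‖₊ : ℝ≥0∞) ^ 2 := by
        intro ω
        rw [nnnorm_mul, ENNReal.coe_mul, mul_pow, hκ, hcc]
      rw [lintegral_congr hptw,
        lintegral_const_mul κ (((hAmeas m ℓ).nnnorm.coe_nnreal_ennreal).pow_const 2)]
      rfl
    have hRHS : ∫⁻ ω, (‖∑ t ∈ Finset.range p, A (m + 1) (t * p ^ m + ℓ) ω‖₊ : ℝ≥0∞) ^ 2 ∂P
        = ∑ t ∈ Finset.range p, Gq P A (m + 1) (t * p ^ m + ℓ) := by
      refine pyth_lintegral _ _ (fun t _ => (hAmeas _ _).aemeasurable)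
        (fun t ht => ?_) (fun t ht t' ht' hne => ?_)
      · obtain ⟨h1, h2, h3⟩ := child_cond hp hm (Finset.mem_range.mp ht) h0 hlt hnd
        exact hL2 _ _ (by omega) h1 h2 h3
      · obtain ⟨a1, a2, a3⟩ := child_cond hp hm (Finset.mem_range.mp ht) h0 hlt hnd
        obtain ⟨b1, b2, b3⟩ := child_cond hp hm (Finset.mem_range.mp ht') h0 hlt hnd
        refine horth _ _ _ _ (by omega) a1 a2 a3 (by omega) b1 b2 b3 ?_
        intro heq
        have h2 : t * p ^ m + ℓ = t' * p ^ m + ℓ := congrArg Prod.snd heq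
        have h3 : t * p ^ m = t' * p ^ m := by omega
        exact hne (Nat.eq_of_mul_eq_mul_right (hpm m) h3)
    rw [← hLHS, htrans, hRHS]
  -- recursion for S
  have hSrec : ∀ m : ℕ, 1 ≤ m → Sq P A p (m + 1) = κ * Sq P A p m := by
    intro m hm
    calc Sq P A p (m + 1)
        = ∑ ℓ ∈ Filq p m, ∑ t ∈ Finset.range p, Gq P A (m + 1) (t * p ^ m + ℓ) :=
          sum_reindex hp m hm _
      _ = ∑ ℓ ∈ Filq p m, κ * Gq P A m ℓ :=
          Finset.sum_congr rfl fun ℓ hℓ => (hkey m ℓ hm hℓ).symm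
      _ = κ * Sq P A p m := by rw [← Finset.mul_sum]; rfl
  have hSpow : ∀ k : ℕ, Sq P A p (1 + k) = κ ^ k * Sq P A p 1 := by
    intro k
    induction k with
    | zero => simp
    | succ k ih =>
      have h1 : 1 + (k + 1) = (1 + k) + 1 := by omega
      rw [h1, hSrec (1 + k) (by omega), ih, pow_succ]
      ring
  have hS1fin : Sq P A p 1 ≠ ∞ := by
    rw [← lt_top_iff_ne_top, Sq]
    exact ENNReal.sum_lt_top.mpr fun ℓ hℓ => lt_top_iff_ne_top.mpr (hGfin 1 ℓ le_rfl hℓ)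
  -- choose M₀
  have hbfin : Sq P A p 1 * (1 - κ)⁻¹ ≠ ∞ :=
    ENNReal.mul_ne_top hS1fin (ENNReal.inv_ne_top.mpr (by
      simp only [ne_eq, tsub_eq_zero_iff_le]
      exact fun h => absurd (lt_of_lt_of_le hκ1 h) (lt_irrefl _)))
  have htend : Tendsto (fun M : ℕ => κ ^ M * (Sq P A p 1 * (1 - κ)⁻¹)) atTop (nhds 0) := by
    have h0 : Tendsto (fun M : ℕ => κ ^ M) atTop (nhds 0) :=
      ENNReal.tendsto_pow_atTop_nhds_zero_of_lt_one hκ1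
    have := ENNReal.Tendsto.mul_const h0 (Or.inr hbfin)
    simpa using this
  have hev : ∀ᶠ M : ℕ in atTop, κ ^ M * (Sq P A p 1 * (1 - κ)⁻¹) < ENNReal.ofReal ε :=
    htend.eventually_lt_const (ENNReal.ofReal_pos.mpr hε)
  obtain ⟨M₁, hM₁⟩ := eventually_atTop.mp hev
  refine ⟨M₁ + 1, ?_⟩
  intro M N hM₀M hMN n
  have hM1 : 1 ≤ M := by omega
  -- the family
  set T : Finset (Σ _ : ℕ, ℕ) := (Finset.Icc M N).sigma (fun m => Filq p m) with hT
  set f : (Σ _ : ℕ, ℕ) → Ω → ℂ :=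
    fun q ω => A q.1 q.2 ω * eFun ((n : ℝ) * (q.2 : ℝ) / (p : ℝ) ^ q.1) with hf
  have hTmem : ∀ q : (Σ _ : ℕ, ℕ), q ∈ T →
      1 ≤ q.1 ∧ 0 < q.2 ∧ q.2 < p ^ q.1 ∧ ¬ p ∣ q.2 := by
    intro q hq
    rw [hT, Finset.mem_sigma] at hq
    have h1 := Finset.mem_Icc.mp hq.1
    have h2 := (hFilmem _ _).mp hq.2
    exact ⟨by omega, h2⟩
  have hfL2 : ∀ q ∈ T, MemLp (f q) 2 P := by
    intro q hq
    obtain ⟨h1, h2, h3, h4⟩ := hTmem q hq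
    have h := (hL2 q.1 q.2 h1 h2 h3 h4).const_mul
      (eFun ((n : ℝ) * (q.2 : ℝ) / (p : ℝ) ^ q.1))
    have heq : (fun ω => eFun ((n : ℝ) * (q.2 : ℝ) / (p : ℝ) ^ q.1) * A q.1 q.2 ω) = f q := by
      funext ω
      rw [hf]
      ring
    rw [← heq]
    exact h
  have hforth : ∀ q ∈ T, ∀ q' ∈ T, q ≠ q' →
      ∫ ω, f q ω * (starRingEnd ℂ) (f q' ω) ∂P = 0 := by
    intro q hq q' hq' hne
    obtain ⟨a1, a2, a3, a4⟩ := hTmem q hq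
    obtain ⟨b1, b2, b3, b4⟩ := hTmem q' hq'
    have hexp : (fun ω => f q ω * (starRingEnd ℂ) (f q' ω))
        = fun ω => (eFun ((n : ℝ) * (q.2 : ℝ) / (p : ℝ) ^ q.1) *
            (starRingEnd ℂ) (eFun ((n : ℝ) * (q'.2 : ℝ) / (p : ℝ) ^ q'.1))) *
            (A q.1 q.2 ω * (starRingEnd ℂ) (A q'.1 q'.2 ω)) := by
      funext ω
      rw [hf]
      simp only [map_mul]
      ring
    rw [hexp, integral_const_mul, horth q.1 q.2 q'.1 q'.2 a1 a2 a3 a4 b1 b2 b3 b4, mul_zero]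
    intro heq
    apply hne
    have h1 : q.1 = q'.1 := congrArg Prod.fst heq
    have h2 : q.2 = q'.2 := congrArg Prod.snd heq
    exact Sigma.ext h1 (heq_of_eq h2)
  have hGTfin : ∀ q ∈ T, Gq P A q.1 q.2 ≠ ∞ := by
    intro q hq
    rw [hT, Finset.mem_sigma] at hq
    have h1 := Finset.mem_Icc.mp hq.1
    exact hGfin q.1 q.2 (by omega) hq.2
  have hcalc : ∫ ω, ‖∑ m ∈ Finset.Icc M N,
        ∑ ℓ ∈ (Finset.Ioo 0 (p ^ m)).filter (fun ℓ => ¬ p ∣ ℓ),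
          A m ℓ ω * eFun ((n : ℝ) * (ℓ : ℝ) / (p : ℝ) ^ m)‖ ^ 2 ∂P
      = (∑ m ∈ Finset.Icc M N, Sq P A p m).toReal := by
    have hre : ∀ ω : Ω, (∑ m ∈ Finset.Icc M N,
        ∑ ℓ ∈ (Finset.Ioo 0 (p ^ m)).filter (fun ℓ => ¬ p ∣ ℓ),
          A m ℓ ω * eFun ((n : ℝ) * (ℓ : ℝ) / (p : ℝ) ^ m)) = ∑ q ∈ T, f q ω := by
      intro ω
      exact Finset.sum_sigma' (Finset.Icc M N) (fun m => Filq p m)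
        (fun m ℓ => A m ℓ ω * eFun ((n : ℝ) * (ℓ : ℝ) / (p : ℝ) ^ m))
    calc ∫ ω, ‖∑ m ∈ Finset.Icc M N,
          ∑ ℓ ∈ (Finset.Ioo 0 (p ^ m)).filter (fun ℓ => ¬ p ∣ ℓ),
            A m ℓ ω * eFun ((n : ℝ) * (ℓ : ℝ) / (p : ℝ) ^ m)‖ ^ 2 ∂P
        = ∫ ω, ‖∑ q ∈ T, f q ω‖ ^ 2 ∂P := by
          simp only [hre]
      _ = ∑ q ∈ T, ∫ ω, ‖f q ω‖ ^ 2 ∂P := pyth_real T f hfL2 hforth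
      _ = ∑ q ∈ T, (Gq P A q.1 q.2).toReal := by
          refine Finset.sum_congr rfl fun q hq => ?_
          have hnrm : ∀ ω, ‖f q ω‖ ^ 2 = ‖A q.1 q.2 ω‖ ^ 2 := fun ω => by
            rw [hf]
            simp only []
            rw [norm_mul, norm_eFun, mul_one]
          calc ∫ ω, ‖f q ω‖ ^ 2 ∂P = ∫ ω, ‖A q.1 q.2 ω‖ ^ 2 ∂P :=
                integral_congr_ae (Filter.Eventually.of_forall fun ω => hnrm ω)
            _ = (Gq P A q.1 q.2).toReal := integral_norm_sq_eq (hAmeas _ _).aemeasurable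
      _ = (∑ q ∈ T, Gq P A q.1 q.2).toReal := (ENNReal.toReal_sum hGTfin).symm
      _ = (∑ m ∈ Finset.Icc M N, Sq P A p m).toReal := by
          rw [hT, ← Finset.sum_sigma']
          rfl
  rw [hcalc]
  -- the geometric bound
  have hSm : ∀ m : ℕ, 1 ≤ m → Sq P A p m = κ ^ (m - 1) * Sq P A p 1 := by
    intro m hm
    have := hSpow (m - 1)
    rwa [show 1 + (m - 1) = m by omega] at this
  have hb1 : ∀ m ∈ Finset.Icc M N, Sq P A p m ≤ κ ^ (M - 1) * κ ^ (m - M) * Sq P A p 1 := by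
    intro m hm
    have hmM := Finset.mem_Icc.mp hm
    rw [hSm m (by omega)]
    refine le_of_eq ?_
    rw [← pow_add]
    congr 2
    omega
  have hb2 : ∑ m ∈ Finset.Icc M N, Sq P A p m
      ≤ κ ^ (M - 1) * Sq P A p 1 * ∑ m ∈ Finset.Icc M N, κ ^ (m - M) := by
    calc ∑ m ∈ Finset.Icc M N, Sq P A p m
        ≤ ∑ m ∈ Finset.Icc M N, κ ^ (M - 1) * κ ^ (m - M) * Sq P A p 1 :=
          Finset.sum_le_sum hb1
      _ = κ ^ (M - 1) * Sq P A p 1 * ∑ m ∈ Finset.Icc M N, κ ^ (m - M) := by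
          rw [Finset.mul_sum]
          refine Finset.sum_congr rfl fun m hm => ?_
          ring
  have hb3 : ∑ m ∈ Finset.Icc M N, κ ^ (m - M) ≤ (1 - κ)⁻¹ := by
    have he1 : ∑ m ∈ Finset.Icc M N, κ ^ (m - M) = ∑ i ∈ Finset.range (N + 1 - M), κ ^ i := by
      rw [← Finset.Ico_add_one_right_eq_Icc, Finset.sum_Ico_eq_sum_range]
      refine Finset.sum_congr rfl fun i _ => ?_
      congr 1
      omega
    rw [he1, ← ENNReal.tsum_geometric κ]
    exact ENNReal.sum_le_tsum _
  have hb4 : ∑ m ∈ Finset.Icc M N, Sq P A p m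
      ≤ κ ^ (M - 1) * (Sq P A p 1 * (1 - κ)⁻¹) := by
    calc ∑ m ∈ Finset.Icc M N, Sq P A p m
        ≤ κ ^ (M - 1) * Sq P A p 1 * ∑ m ∈ Finset.Icc M N, κ ^ (m - M) := hb2
      _ ≤ κ ^ (M - 1) * Sq P A p 1 * (1 - κ)⁻¹ := by
          exact mul_le_mul_right hb3 _
      _ = κ ^ (M - 1) * (Sq P A p 1 * (1 - κ)⁻¹) := by ring
  have hfin : ∑ m ∈ Finset.Icc M N, Sq P A p m ≤ ENNReal.ofReal ε :=
    le_trans hb4 (le_of_lt (hM₁ (M - 1) (by omega)))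
  exact ENNReal.toReal_le_of_le_ofReal hε.le hfin
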